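/- Logarithmic upper bound on boxicity: let G be a finite simple graph on n ≥ 2 vertices with maximum degree Δ. Then the boxicity of G is at most ⌈(Δ + 2)·ln n⌉. -/

import Mathlib

/-- A simple graph `G` is an interval graph if each vertex can be assigned a nonempty
closed real interval `[a v, b v]` such that two distinct vertices are adjacent
iff their intervals intersect. -/
def IsIntervalGraph {V : Type*} (G : SimpleGraph V) : Prop :=
  ∃ a b : V → ℝ, (∀ v, a v ≤ b v) ∧
    ∀ u v : V, u ≠ v →
      (G.Adj u v ↔ (Set.Icc (a u) (b u) ∩ Set.Icc (a v) (b v)).Nonempty)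

/-- The boxicity of a simple graph `G`: the least `m` such that `G` is the
edge-intersection of `m` interval graphs on the same vertex set.  The empty
intersection (`m = 0`) is the complete graph `⊤`, so complete graphs have
boxicity `0`. -/
noncomputable def boxicity {V : Type*} (G : SimpleGraph V) : ℕ :=
  sInf {m : ℕ | ∃ I : Fin m → SimpleGraph V,
    (∀ k, IsIntervalGraph (I k)) ∧ G = ⨅ k, I k}

namespace BoxAux

open Finset

variable {V : Type*} [Fintype V] [DecidableEq V]

/-- the set of orderings for which `v` is a maximum of `T`. -/
noncomputable def Aset (T : Finset V) (v : V) : Finset (V ≃ Fin (Fintype.card V)) :=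
  @Finset.filter _ (fun σ => ∀ x ∈ T, σ x ≤ σ v) (fun _ => Classical.propDecidable _)
    Finset.univ

lemma mem_Aset {T : Finset V} {v : V} {σ : V ≃ Fin (Fintype.card V)} :
    σ ∈ Aset T v ↔ ∀ x ∈ T, σ x ≤ σ v := by
  simp [Aset, Finset.mem_filter]

lemma Aset_card_mul (T : Finset V) {v : V} (hv : v ∈ T) :
    (Aset T v).card * T.card = Fintype.card (V ≃ Fin (Fintype.card V)) := by
  classical
  have hswapT : ∀ {w x : V}, w ∈ T → x ∈ T → Equiv.swap v w x ∈ T := by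
    intro w x hw hx
    rcases eq_or_ne x v with rfl | hxv
    · rw [Equiv.swap_apply_left]; exact hw
    rcases eq_or_ne x w with rfl | hxw
    · rw [Equiv.swap_apply_right]; exact hv
    · rw [Equiv.swap_apply_of_ne_of_ne hxv hxw]; exact hx
  have hcard : ∀ w ∈ T, (Aset T w).card = (Aset T v).card := by
    intro w hw
    refine Finset.card_bij' (fun σ _ => (Equiv.swap v w).trans σ)
      (fun σ _ => (Equiv.swap v w).trans σ) ?_ ?_ ?_ ?_
    · intro σ hσ
      rw [mem_Aset] at hσ ⊢
      intro x hx
      have h := hσ _ (hswapT hw hx)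
      simpa [Equiv.trans_apply, Equiv.swap_apply_left] using h
    · intro σ hσ
      rw [mem_Aset] at hσ ⊢
      intro x hx
      have h := hσ _ (hswapT hw hx)
      simpa [Equiv.trans_apply, Equiv.swap_apply_right] using h
    · intro σ _; ext x; simp [Equiv.trans_apply, Equiv.swap_apply_self]
    · intro σ _; ext x; simp [Equiv.trans_apply, Equiv.swap_apply_self]
  have hcover : (Finset.univ : Finset (V ≃ Fin (Fintype.card V)))
      = T.biUnion (fun w => Aset T w) := by
    ext σ
    simp only [Finset.mem_univ, true_iff, Finset.mem_biUnion]
    obtain ⟨w, hw, hmax⟩ := T.exists_max_image (fun x => σ x) ⟨v, hv⟩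
    exact ⟨w, hw, mem_Aset.2 hmax⟩
  have hdisj : ∀ w ∈ T, ∀ w' ∈ T, w ≠ w' → Disjoint (Aset T w) (Aset T w') := by
    intro w hw w' hw' hne
    rw [Finset.disjoint_left]
    intro σ h1 h2
    rw [mem_Aset] at h1 h2
    exact hne (σ.injective (le_antisymm (h2 w hw) (h1 w' hw')))
  calc (Aset T v).card * T.card = ∑ _w ∈ T, (Aset T v).card := by
        rw [Finset.sum_const, smul_eq_mul, mul_comm]
    _ = ∑ w ∈ T, (Aset T w).card := (Finset.sum_congr rfl (fun w hw => (hcard w hw).symm))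
    _ = Fintype.card (V ≃ Fin (Fintype.card V)) := by
        rw [← Finset.card_biUnion hdisj, ← hcover, Finset.card_univ]

variable (G : SimpleGraph V) [DecidableRel G.Adj]

/-- closed neighborhood -/
def Nb (u : V) : Finset V := insert u (G.neighborFinset u)

lemma mem_Nb_self (u : V) : u ∈ Nb G u := Finset.mem_insert_self _ _

lemma Nb_card (u : V) : (Nb G u).card = G.degree u + 1 := by
  rw [Nb, Finset.card_insert_of_notMem (G.notMem_neighborFinset_self u),
    SimpleGraph.card_neighborFinset_eq_degree]

/-- `v` comes strictly after all of the closed neighborhood of `u`. -/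
def Sep (σ : V ≃ Fin (Fintype.card V)) (u v : V) : Prop := ∀ w ∈ Nb G u, σ w < σ v

noncomputable def E1set (u v : V) : Finset (V ≃ Fin (Fintype.card V)) :=
  @Finset.filter _ (fun σ => Sep G σ u v) (fun _ => Classical.propDecidable _) Finset.univ

lemma mem_E1set {u v : V} {σ : V ≃ Fin (Fintype.card V)} :
    σ ∈ E1set G u v ↔ Sep G σ u v := by
  simp [E1set, Finset.mem_filter]

lemma E1set_card_mul {u v : V} (hne : u ≠ v) (hadj : ¬ G.Adj u v) :
    (E1set G u v).card * (G.degree u + 2) = Fintype.card (V ≃ Fin (Fintype.card V)) := by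
  have hvT : v ∉ Nb G u := by
    simp only [Nb, Finset.mem_insert, SimpleGraph.mem_neighborFinset]
    rintro (rfl | h)
    · exact hne rfl
    · exact hadj h
  have hE : E1set G u v = Aset (insert v (Nb G u)) v := by
    ext σ
    rw [mem_E1set, mem_Aset]
    constructor
    · intro h x hx
      rcases Finset.mem_insert.1 hx with rfl | hx
      · exact le_rfl
      · exact (h x hx).le
    · intro h w hw
      exact lt_of_le_of_ne (h w (Finset.mem_insert_of_mem hw))
        (fun hEq => hvT (by rwa [σ.injective hEq] at hw))
  have hc : (insert v (Nb G u)).card = G.degree u + 2 := by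
    rw [Finset.card_insert_of_notMem hvT, Nb_card]
  rw [hE, ← hc]
  exact Aset_card_mul _ (Finset.mem_insert_self _ _)

noncomputable def BPset (u v : V) : Finset (V ≃ Fin (Fintype.card V)) :=
  @Finset.filter _ (fun σ => ¬ Sep G σ u v ∧ ¬ Sep G σ v u)
    (fun _ => Classical.propDecidable _) Finset.univ

lemma mem_BPset {u v : V} {σ : V ≃ Fin (Fintype.card V)} :
    σ ∈ BPset G u v ↔ ¬ Sep G σ u v ∧ ¬ Sep G σ v u := by
  simp [BPset, Finset.mem_filter]

lemma BPset_card_le {u v : V} (hne : u ≠ v) (hadj : ¬ G.Adj u v) :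
    ((BPset G u v).card : ℝ) ≤ (Fintype.card (V ≃ Fin (Fintype.card V)) : ℝ)
      * ((G.maxDegree : ℝ) / ((G.maxDegree : ℝ) + 2)) := by
  classical
  set N := Fintype.card (V ≃ Fin (Fintype.card V)) with hN
  have hdisj : Disjoint (E1set G u v) (E1set G v u) := by
    rw [Finset.disjoint_left]
    intro σ h1 h2
    rw [mem_E1set] at h1 h2
    exact absurd (h1 u (mem_Nb_self G u)) (not_lt.2 (h2 v (mem_Nb_self G v)).le)
  have hBP : BPset G u v = Finset.univ \ (E1set G u v ∪ E1set G v u) := by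
    ext σ
    simp only [mem_BPset, Finset.mem_sdiff, Finset.mem_univ, true_and, Finset.mem_union,
      mem_E1set, not_or]
  have hsub : (E1set G u v ∪ E1set G v u) ⊆ Finset.univ := Finset.subset_univ _
  have hcard : (BPset G u v).card = N - ((E1set G u v).card + (E1set G v u).card) := by
    rw [hBP, Finset.card_sdiff_of_subset hsub, Finset.card_univ, Finset.card_union_of_disjoint hdisj]
  have hle : (E1set G u v).card + (E1set G v u).card ≤ N := by
    rw [← Finset.card_union_of_disjoint hdisj, hN, ← Finset.card_univ (α := V ≃ Fin (Fintype.card V))]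
    exact Finset.card_le_card hsub
  have hcastR : ((BPset G u v).card : ℝ)
      = (N : ℝ) - (((E1set G u v).card : ℝ) + ((E1set G v u).card : ℝ)) := by
    rw [hcard, Nat.cast_sub hle]; push_cast; ring
  have hΔ2 : (0:ℝ) < (G.maxDegree : ℝ) + 2 := by positivity
  have key : ∀ w z : V, w ≠ z → ¬ G.Adj w z →
      (N : ℝ) / ((G.maxDegree : ℝ) + 2) ≤ ((E1set G w z).card : ℝ) := by
    intro w z hwz hwzadj
    have h := E1set_card_mul G hwz hwzadj
    have hd2 : (0:ℝ) < ((G.degree w : ℝ) + 2) := by positivity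
    have hEeq : ((E1set G w z).card : ℝ) = (N : ℝ) / ((G.degree w : ℝ) + 2) := by
      rw [eq_div_iff (ne_of_gt hd2)]
      exact_mod_cast h
    rw [hEeq]
    have hdle : (G.degree w : ℝ) + 2 ≤ (G.maxDegree : ℝ) + 2 := by
      have := G.degree_le_maxDegree w
      have h' : (G.degree w : ℝ) ≤ (G.maxDegree : ℝ) := Nat.cast_le.2 this
      linarith
    exact div_le_div_of_nonneg_left (by positivity) hd2 hdle
  have h1 := key u v hne hadj
  have h2 := key v u hne.symm (fun h => hadj h.symm)
  have heq : (N:ℝ) * ((G.maxDegree : ℝ) / ((G.maxDegree : ℝ) + 2))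
      = (N:ℝ) - 2 * ((N:ℝ) / ((G.maxDegree : ℝ) + 2)) := by
    field_simp; ring
  rw [hcastR, heq]
  linarith

noncomputable def aIG (σ : V ≃ Fin (Fintype.card V)) (x : V) : ℝ := ((σ x : ℕ) : ℝ)

noncomputable def bIG (σ : V ≃ Fin (Fintype.card V)) (x : V) : ℝ :=
  (((Nb G x).sup fun w => (σ w : ℕ) : ℕ) : ℝ)

lemma aIG_le_bIG (σ : V ≃ Fin (Fintype.card V)) (x : V) : aIG σ x ≤ bIG G σ x :=
  Nat.cast_le.2 (Finset.le_sup (f := fun w => ((σ w : ℕ))) (mem_Nb_self G x))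

noncomputable def IG (σ : V ≃ Fin (Fintype.card V)) : SimpleGraph V where
  Adj x y := x ≠ y ∧
    (Set.Icc (aIG σ x) (bIG G σ x) ∩ Set.Icc (aIG σ y) (bIG G σ y)).Nonempty
  symm := by
    refine ⟨fun x y h => ?_⟩
    exact ⟨h.1.symm, by rw [Set.inter_comm]; exact h.2⟩
  loopless := by
    refine ⟨fun x h => ?_⟩
    exact h.1 rfl

lemma isIntervalGraph_IG (σ : V ≃ Fin (Fintype.card V)) : IsIntervalGraph (IG G σ) := by
  refine ⟨aIG σ, bIG G σ, aIG_le_bIG G σ, fun u v h => ?_⟩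
  constructor
  · intro hadj; exact hadj.2
  · intro hint; exact ⟨h, hint⟩

lemma G_le_IG (σ : V ≃ Fin (Fintype.card V)) : G ≤ IG G σ := by
  intro x y h
  refine ⟨G.ne_of_adj h, ?_⟩
  have hyx : y ∈ Nb G x :=
    Finset.mem_insert_of_mem (by rwa [SimpleGraph.mem_neighborFinset])
  have hxy : x ∈ Nb G y :=
    Finset.mem_insert_of_mem (by rw [SimpleGraph.mem_neighborFinset]; exact h.symm)
  rcases le_total (aIG σ x) (aIG σ y) with hle | hle
  · refine ⟨aIG σ y, ⟨⟨hle, ?_⟩, ⟨le_rfl, aIG_le_bIG G σ y⟩⟩⟩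
    exact Nat.cast_le.2 (Finset.le_sup (f := fun w => ((σ w : ℕ))) hyx)
  · refine ⟨aIG σ x, ⟨⟨le_rfl, aIG_le_bIG G σ x⟩, ⟨hle, ?_⟩⟩⟩
    exact Nat.cast_le.2 (Finset.le_sup (f := fun w => ((σ w : ℕ))) hxy)

lemma sep_not_adj {σ : V ≃ Fin (Fintype.card V)} {x y : V} (hsep : Sep G σ x y) :
    ¬ (IG G σ).Adj x y := by
  rintro ⟨hne, z, ⟨hz1, hz2⟩, ⟨hz3, hz4⟩⟩
  have h0 : 0 < (σ y : ℕ) :=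
    lt_of_le_of_lt (Nat.zero_le _) (hsep x (mem_Nb_self G x))
  have hsup : (Nb G x).sup (fun w => (σ w : ℕ)) < (σ y : ℕ) := by
    rw [Finset.sup_lt_iff h0]
    intro w hw
    exact hsep w hw
  have : bIG G σ x < aIG σ y := by
    unfold bIG aIG
    exact_mod_cast hsup
  have h1 : z ≤ bIG G σ x := hz2
  have h2 : aIG σ y ≤ z := hz3
  linarith


lemma exists_good (hn : 2 ≤ Fintype.card V) :
    ∃ f : Fin (⌈((G.maxDegree : ℝ) + 2) * Real.log (Fintype.card V)⌉₊) →
        (V ≃ Fin (Fintype.card V)),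
      ∀ u v : V, u ≠ v → ¬ G.Adj u v →
        ∃ k, Sep G (f k) u v ∨ Sep G (f k) v u := by
  classical
  set n := Fintype.card V with hn'
  set Δ := G.maxDegree with hΔ'
  set m := ⌈((Δ : ℝ) + 2) * Real.log n⌉₊ with hm
  set N := Fintype.card (V ≃ Fin n) with hN
  have hN0 : 0 < N := Fintype.card_pos_iff.2 ⟨Fintype.equivFin V⟩
  have hnR : (2:ℝ) ≤ (n:ℝ) := by exact_mod_cast hn
  have hn0 : (0:ℝ) < (n:ℝ) := by linarith
  have hΔ2 : (0:ℝ) < (Δ:ℝ) + 2 := by positivity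
  -- step B : ((Δ:ℝ)/(Δ+2))^m ≤ (n^2)⁻¹
  have hstepB : ((Δ:ℝ) / ((Δ:ℝ) + 2)) ^ m ≤ ((n:ℝ) ^ 2)⁻¹ := by
    have ht1 : (Δ:ℝ)/((Δ:ℝ)+2) = 1 - 2/((Δ:ℝ)+2) := by field_simp; ring
    have h1 : (Δ:ℝ)/((Δ:ℝ)+2) ≤ Real.exp (-(2/((Δ:ℝ)+2))) := by
      rw [ht1]
      have := Real.add_one_le_exp (-(2/((Δ:ℝ)+2)))
      linarith
    have hnn : (0:ℝ) ≤ (Δ:ℝ)/((Δ:ℝ)+2) := by positivity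
    have h2 : ((Δ:ℝ)/((Δ:ℝ)+2)) ^ m ≤ Real.exp (-(2/((Δ:ℝ)+2))) ^ m :=
      pow_le_pow_left₀ hnn h1 m
    have h3 : Real.exp (-(2/((Δ:ℝ)+2))) ^ m = Real.exp ((m:ℝ) * (-(2/((Δ:ℝ)+2)))) :=
      (Real.exp_nat_mul _ m).symm
    have hceil : ((Δ:ℝ)+2) * Real.log n ≤ (m:ℝ) := Nat.le_ceil _
    have h4 : Real.exp ((m:ℝ) * (-(2/((Δ:ℝ)+2)))) ≤ Real.exp (-(2 * Real.log n)) := by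
      apply Real.exp_le_exp.2
      rw [mul_neg, neg_le_neg_iff, mul_div_assoc']
      rw [le_div_iff₀ hΔ2]
      nlinarith [hceil]
    have h5 : Real.exp (-(2 * Real.log n)) = ((n:ℝ)^2)⁻¹ := by
      rw [Real.exp_neg]
      congr 1
      rw [show (2:ℝ) * Real.log (n:ℝ) = Real.log ((n:ℝ)^2) by
        rw [Real.log_pow]; push_cast; ring]
      exact Real.exp_log (by positivity)
    calc ((Δ:ℝ)/((Δ:ℝ)+2)) ^ m ≤ Real.exp (-(2/((Δ:ℝ)+2))) ^ m := h2
      _ = Real.exp ((m:ℝ) * (-(2/((Δ:ℝ)+2)))) := h3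
      _ ≤ Real.exp (-(2 * Real.log n)) := h4
      _ = ((n:ℝ)^2)⁻¹ := h5
  -- counting bad tuples
  set P : Finset (V × V) :=
    Finset.univ.filter (fun p : V × V => p.1 ≠ p.2 ∧ ¬ G.Adj p.1 p.2) with hP
  set Bad : Finset (Fin m → (V ≃ Fin n)) :=
    Finset.univ.filter (fun f : Fin m → (V ≃ Fin n) => ∃ p ∈ P, ∀ k, f k ∈ BPset G p.1 p.2)
      with hBad
  have hsub : Bad ⊆ P.biUnion
      (fun p => Fintype.piFinset (fun _ : Fin m => BPset G p.1 p.2)) := by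
    intro f hf
    rw [hBad, Finset.mem_filter] at hf
    obtain ⟨p, hp, hk⟩ := hf.2
    exact Finset.mem_biUnion.2 ⟨p, hp, Fintype.mem_piFinset.2 hk⟩
  have hcard1 : Bad.card ≤ ∑ p ∈ P, (BPset G p.1 p.2).card ^ m := by
    refine (Finset.card_le_card hsub).trans ((Finset.card_biUnion_le).trans ?_)
    refine Finset.sum_le_sum (fun p _ => ?_)
    rw [Fintype.card_piFinset_const]
  have hmemP : ∀ p : V × V, p ∈ P → p.1 ≠ p.2 ∧ ¬ G.Adj p.1 p.2 := by
    intro p hp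
    rw [hP, Finset.mem_filter] at hp
    exact hp.2
  have hterm : ∀ p ∈ P, ((BPset G p.1 p.2).card : ℝ) ^ m
      ≤ ((N:ℝ) * ((Δ:ℝ)/((Δ:ℝ)+2))) ^ m := by
    intro p hp
    exact pow_le_pow_left₀ (Nat.cast_nonneg _)
      (BPset_card_le G (hmemP p hp).1 (hmemP p hp).2) m
  have hPcard : (P.card : ℝ) ≤ (n:ℝ)^2 - (n:ℝ) := by
    have h1 : P ⊆ (Finset.univ : Finset V).offDiag := by
      intro p hp
      exact Finset.mem_offDiag.2 ⟨Finset.mem_univ _, Finset.mem_univ _, (hmemP p hp).1⟩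
    have h2 := Finset.card_le_card h1
    rw [Finset.offDiag_card, Finset.card_univ] at h2
    have h3 : (P.card:ℝ) ≤ ((Fintype.card V * Fintype.card V - Fintype.card V : ℕ):ℝ) :=
      Nat.cast_le.2 h2
    rw [Nat.cast_sub (Nat.le_mul_of_pos_left _ (by omega))] at h3
    push_cast at h3
    nlinarith [h3]
  have hBadR : (Bad.card : ℝ) < (N:ℝ)^m := by
    have hc1 : (Bad.card : ℝ) ≤ ∑ p ∈ P, ((BPset G p.1 p.2).card : ℝ)^m := by
      calc (Bad.card : ℝ) ≤ ((∑ p ∈ P, (BPset G p.1 p.2).card ^ m : ℕ) : ℝ) :=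
            Nat.cast_le.2 hcard1
        _ = ∑ p ∈ P, ((BPset G p.1 p.2).card : ℝ)^m := by push_cast; rfl
    have hc2 : ∑ p ∈ P, ((BPset G p.1 p.2).card : ℝ)^m
        ≤ P.card * ((N:ℝ) * ((Δ:ℝ)/((Δ:ℝ)+2)))^m := by
      have := Finset.sum_le_card_nsmul P (fun p => ((BPset G p.1 p.2).card : ℝ)^m)
        (((N:ℝ) * ((Δ:ℝ)/((Δ:ℝ)+2)))^m) hterm
      simpa [nsmul_eq_mul] using this
    have hc3 : (P.card:ℝ) * ((N:ℝ) * ((Δ:ℝ)/((Δ:ℝ)+2)))^m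
        ≤ ((n:ℝ)^2 - (n:ℝ)) * ((N:ℝ)^m * ((n:ℝ)^2)⁻¹) := by
      rw [mul_pow]
      refine mul_le_mul hPcard ?_ (by positivity) (by nlinarith)
      exact mul_le_mul_of_nonneg_left hstepB (by positivity)
    have hc4 : ((n:ℝ)^2 - (n:ℝ)) * ((N:ℝ)^m * ((n:ℝ)^2)⁻¹) < (N:ℝ)^m := by
      have hNm : (0:ℝ) < (N:ℝ)^m := by
        have : (0:ℝ) < (N:ℝ) := by exact_mod_cast hN0
        positivity
      have hfrac : ((n:ℝ)^2 - (n:ℝ)) * ((n:ℝ)^2)⁻¹ < 1 := by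
        rw [← div_eq_mul_inv, div_lt_one (by positivity)]
        linarith
      calc ((n:ℝ)^2 - (n:ℝ)) * ((N:ℝ)^m * ((n:ℝ)^2)⁻¹)
          = (((n:ℝ)^2 - (n:ℝ)) * ((n:ℝ)^2)⁻¹) * (N:ℝ)^m := by ring
        _ < 1 * (N:ℝ)^m := by
            exact mul_lt_mul_of_pos_right hfrac hNm
        _ = (N:ℝ)^m := one_mul _
    linarith
  have hBadN : Bad.card < N ^ m := by
    have : (Bad.card : ℝ) < ((N ^ m : ℕ) : ℝ) := by push_cast; exact hBadR
    exact_mod_cast this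
  have hcardall : (Finset.univ : Finset (Fin m → (V ≃ Fin n))).card = N ^ m := by
    rw [Finset.card_univ, Fintype.card_fun]
    simp [hN]
  have hex : ∃ f : Fin m → (V ≃ Fin n), f ∉ Bad := by
    by_contra hcon
    push_neg at hcon
    have : Bad = Finset.univ := Finset.eq_univ_iff_forall.2 hcon
    rw [this, hcardall] at hBadN
    exact lt_irrefl _ hBadN
  obtain ⟨f, hf⟩ := hex
  refine ⟨f, fun u v huv hadj => ?_⟩
  rw [hBad, Finset.mem_filter] at hf
  push_neg at hf
  have hfp := hf (Finset.mem_univ f) (u, v)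
    (by rw [hP, Finset.mem_filter]; exact ⟨Finset.mem_univ _, huv, hadj⟩)
  obtain ⟨k, hk⟩ := hfp
  refine ⟨k, ?_⟩
  by_contra hcon
  push_neg at hcon
  exact hk ((mem_BPset G).2 ⟨hcon.1, hcon.2⟩)

end BoxAux

theorem boxicity_le_log_bound {V : Type*} [Fintype V] (G : SimpleGraph V)
    [DecidableRel G.Adj] (hn : 2 ≤ Fintype.card V) :
    boxicity G ≤ ⌈((G.maxDegree : ℝ) + 2) * Real.log (Fintype.card V)⌉₊ := by
  classical
  obtain ⟨f, hf⟩ := BoxAux.exists_good G hn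
  apply Nat.sInf_le
  refine ⟨fun k => BoxAux.IG G (f k), fun k => BoxAux.isIntervalGraph_IG G (f k), ?_⟩
  apply le_antisymm
  · exact le_iInf (fun k => BoxAux.G_le_IG G (f k))
  · intro x y hxy
    by_contra hGxy
    have hall := (SimpleGraph.iInf_adj.1 hxy).1
    have hne : x ≠ y := (SimpleGraph.iInf_adj.1 hxy).2
    obtain ⟨k, hk⟩ := hf x y hne hGxy
    cases hk with
    | inl h => exact BoxAux.sep_not_adj G h (hall k)
    | inr h => exact BoxAux.sep_not_adj G h (hall k).symm
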